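/- Let F_q be a finite field and let s be a uniformly random element of F_q. Let P(x) = s + Σ_{i=1}^{t−1} p_i x^i where p_1,...,p_{t−1} are i.i.d. uniform on F_q, independent of s. Then for any t−1 distinct nonzero points γ_1,...,γ_{t−1} ∈ F_q, the vector (P(γ_1),...,P(γ_{t−1})) is independent of s; equivalently, the conditional distribution of s given these t−1 evaluations is uniform. -/

import Mathlib

open ProbabilityTheory

private lemma ncard_prod' {α β : Type*} (s : Set α) (t : Set β) :
    (s ×ˢ t).ncard = s.ncard * t.ncard := by
  rw [← Nat.card_coe_set_eq, ← Nat.card_coe_set_eq, ← Nat.card_coe_set_eq,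
    Nat.card_congr (Equiv.Set.prod s t), Nat.card_prod]

private lemma unif_apply {Ω : Type*} [Fintype Ω] [Nonempty Ω] [MeasurableSpace Ω]
    [MeasurableSingletonClass Ω]
    (S : Set Ω) :
    (PMF.uniformOfFintype Ω).toMeasure S = (S.ncard : ENNReal) * (Fintype.card Ω : ENNReal)⁻¹ := by
  classical
  rw [PMF.toMeasure_apply_fintype]
  have : ∀ x : Ω, S.indicator (⇑(PMF.uniformOfFintype Ω)) x
      = S.indicator (fun _ => (Fintype.card Ω : ENNReal)⁻¹) x := by
    intro x; unfold Set.indicator; split <;> simp [PMF.uniformOfFintype_apply]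
  simp_rw [this]
  rw [Finset.sum_indicator_eq_sum_filter]
  rw [Finset.sum_const, nsmul_eq_mul]
  congr 1
  rw [Set.ncard_eq_toFinset_card']
  congr 2
  ext x; simp

/-- Perfect secrecy of Shamir secret sharing: if the secret `s` and the coefficients
`p_1, …, p_{t-1}` are i.i.d. uniform on `F_q` (modelled by the uniform measure on
`F × (Fin (t-1) → F)`), then for any `t-1` distinct nonzero evaluation points
`γ_1, …, γ_{t-1}`, the vector of evaluations `(P(γ_1), …, P(γ_{t-1}))` of
`P(x) = s + ∑ p_i x^i` is independent of the secret `s`. -/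
theorem shamir_perfect_secrecy (F : Type*) [Field F] [Fintype F] (t : ℕ) (ht : 1 ≤ t)
    (γ : Fin (t - 1) → F) (hinj : Function.Injective γ) (hne : ∀ j, γ j ≠ 0) :
    letI Ω := F × (Fin (t - 1) → F)
    letI : MeasurableSpace Ω := ⊤
    letI : MeasurableSpace F := ⊤
    letI : MeasurableSpace (Fin (t - 1) → F) := ⊤
    letI μ := (PMF.uniformOfFintype Ω).toMeasure
    IndepFun (fun ω : Ω => ω.1)
      (fun (ω : Ω) (j : Fin (t - 1)) =>
        ω.1 + ∑ i : Fin (t - 1), ω.2 i * γ j ^ ((i : ℕ) + 1)) μ := by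
  classical
  set Ω := F × (Fin (t - 1) → F) with hΩdef
  letI : MeasurableSpace Ω := ⊤
  haveI : MeasurableSingletonClass Ω := ⟨fun _ => MeasurableSpace.measurableSet_top⟩
  -- the matrix of the evaluation map
  set M : Matrix (Fin (t - 1)) (Fin (t - 1)) F :=
    Matrix.of (fun j i => γ j ^ ((i : ℕ) + 1)) with hMdef
  have hMprod : M = Matrix.diagonal γ * Matrix.vandermonde γ := by
    ext j i
    simp [hMdef, Matrix.mul_apply, Matrix.diagonal, Matrix.vandermonde, pow_succ']
  have hMdet : IsUnit M.det := by
    rw [hMprod, Matrix.det_mul, Matrix.det_diagonal, Matrix.det_vandermonde]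
    apply IsUnit.mul
    · exact (Finset.prod_ne_zero_iff.mpr (fun j _ => hne j)).isUnit
    · refine (Finset.prod_ne_zero_iff.mpr fun i _ => ?_).isUnit
      refine Finset.prod_ne_zero_iff.mpr fun j hj => sub_ne_zero.mpr fun h => ?_
      exact (Finset.mem_Ioi.mp hj).ne' (hinj h)
  have hmulVec : ∀ (p : Fin (t - 1) → F) (j : Fin (t - 1)),
      M.mulVec p j = ∑ i : Fin (t - 1), p i * γ j ^ ((i : ℕ) + 1) := by
    intro p j
    simp [Matrix.mulVec, dotProduct, hMdef, mul_comm]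
  -- the bijection (s, p) ↦ (s, evaluations)
  set e : Ω ≃ Ω :=
    { toFun := fun ω => (ω.1, fun j => ω.1 + ∑ i : Fin (t - 1), ω.2 i * γ j ^ ((i : ℕ) + 1))
      invFun := fun ω => (ω.1, M⁻¹.mulVec (fun j => ω.2 j - ω.1))
      left_inv := by
        intro ω
        refine Prod.ext rfl ?_
        have : (fun j => (ω.1 + ∑ i : Fin (t - 1), ω.2 i * γ j ^ ((i : ℕ) + 1)) - ω.1)
            = M.mulVec ω.2 := by
          funext j; rw [hmulVec]; ring
        simp only [this, Matrix.mulVec_mulVec, Matrix.nonsing_inv_mul M hMdet,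
          Matrix.one_mulVec]
      right_inv := by
        intro ω
        refine Prod.ext rfl ?_
        funext j
        have h2 : ∑ i : Fin (t - 1), M⁻¹.mulVec (fun j => ω.2 j - ω.1) i * γ j ^ ((i : ℕ) + 1)
            = M.mulVec (M⁻¹.mulVec (fun j => ω.2 j - ω.1)) j := (hmulVec _ j).symm
        simp only [h2, Matrix.mulVec_mulVec, Matrix.mul_nonsing_inv M hMdet,
          Matrix.one_mulVec]
        ring } with hedef
  rw [indepFun_iff_measure_inter_preimage_eq_mul]
  intro A B _ _
  have hfA : (fun ω : Ω => ω.1) ⁻¹' A = A ×ˢ (Set.univ : Set (Fin (t - 1) → F)) := by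
    ext ω; exact ⟨fun h => ⟨h, trivial⟩, fun h => h.1⟩
  have hgB : (fun (ω : Ω) (j : Fin (t - 1)) =>
      ω.1 + ∑ i : Fin (t - 1), ω.2 i * γ j ^ ((i : ℕ) + 1)) ⁻¹' B
      = e ⁻¹' ((Set.univ : Set F) ×ˢ B) := by
    ext ω; exact ⟨fun h => ⟨trivial, h⟩, fun h => h.2⟩
  have hinter : (fun ω : Ω => ω.1) ⁻¹' A ∩ (fun (ω : Ω) (j : Fin (t - 1)) =>
      ω.1 + ∑ i : Fin (t - 1), ω.2 i * γ j ^ ((i : ℕ) + 1)) ⁻¹' B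
      = e ⁻¹' (A ×ˢ B) := by
    ext ω; exact ⟨fun h => ⟨h.1, h.2⟩, fun h => ⟨h.1, h.2⟩⟩
  have hecard : ∀ S : Set Ω, (e ⁻¹' S).ncard = S.ncard := by
    intro S
    rw [← Equiv.image_symm_eq_preimage, Set.ncard_image_of_injective _ e.symm.injective]
  rw [hinter, hfA, hgB, unif_apply, unif_apply, unif_apply, hecard, hecard,
    ncard_prod', ncard_prod', ncard_prod', Set.ncard_univ, Set.ncard_univ]
  push_cast
  -- now pure ENNReal counting arithmetic
  set a := (A.ncard : ENNReal)
  set b := (B.ncard : ENNReal)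
  set cF := (Nat.card F : ENNReal)
  set cV := (Nat.card (Fin (t - 1) → F) : ENNReal)
  have hΩ : (Fintype.card Ω : ENNReal) = cF * cV := by
    simp only [cF, cV, Nat.card_eq_fintype_card]
    norm_cast
    exact Fintype.card_prod F (Fin (t - 1) → F)
  have hcF0 : cF ≠ 0 := by
    simp [cF, Nat.card_eq_fintype_card, Fintype.card_ne_zero]
  have hcV0 : cV ≠ 0 := by
    simp [cV, Nat.card_eq_fintype_card, Fintype.card_ne_zero]
  have hcFt : cF ≠ ⊤ := by simp [cF]
  have hcVt : cV ≠ ⊤ := by simp [cV]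
  rw [hΩ, ENNReal.mul_inv (Or.inl hcF0) (Or.inl hcFt)]
  have h1 : cV * cV⁻¹ = 1 := ENNReal.mul_inv_cancel hcV0 hcVt
  have h2 : cF * cF⁻¹ = 1 := ENNReal.mul_inv_cancel hcF0 hcFt
  calc a * b * (cF⁻¹ * cV⁻¹)
      = (a * b * (cF⁻¹ * cV⁻¹)) * ((cV * cV⁻¹) * (cF * cF⁻¹)) := by rw [h1, h2]; ring
    _ = (a * cV * (cF⁻¹ * cV⁻¹)) * (cF * b * (cF⁻¹ * cV⁻¹)) := by ring
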